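/- For every d-dimensional latin hypercube Q of order n and every k with 0 ≤ k ≤ d, the number of k-dimensional cuboctahedra in Q is at most (d choose k) · n^(2d−1) · (n−1)^k. -/

import Mathlib

/-- A `d`-dimensional latin hypercube of order `n`: in each line (each coordinate varies,
the others are fixed) all symbols are distinct. -/
def IsLatinHypercube {d n : ℕ} (Q : (Fin d → Fin n) → Fin n) : Prop :=
  ∀ (i : Fin d) (x : Fin d → Fin n),
    Function.Bijective (fun v : Fin n => Q (Function.update x i v))

/-- `(A, B)` is a cuboctahedron of the hypercube `Q`: the two (possibly degenerate)
subcubes of order 2 determined by the pairs `A i` and `B i` carry the same symbols. -/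
def IsCuboct {d n : ℕ} (Q : (Fin d → Fin n) → Fin n)
    (A B : Fin d → Fin n × Fin n) : Prop :=
  ∀ j : Fin d → Fin 2,
    Q (fun i => if j i = 0 then (A i).1 else (A i).2) =
    Q (fun i => if j i = 0 then (B i).1 else (B i).2)

/-- A cuboctahedron `(A, B)` is `k`-dimensional if the coordinates where `A` (resp. `B`)
has two distinct values coincide and there are exactly `k` of them. -/
def IsKDimCuboct {d n : ℕ} (k : ℕ) (A B : Fin d → Fin n × Fin n) : Prop :=
  {i | (A i).1 ≠ (A i).2} = {i | (B i).1 ≠ (B i).2} ∧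
  {i | (A i).1 ≠ (A i).2}.ncard = k

/-- The number of `k`-dimensional cuboctahedra of the hypercube `Q`. -/
noncomputable def kCuboctCount {d n : ℕ} (Q : (Fin d → Fin n) → Fin n) (k : ℕ) : ℕ :=
  Set.ncard {p : (Fin d → Fin n × Fin n) × (Fin d → Fin n × Fin n) |
    IsCuboct Q p.1 p.2 ∧ IsKDimCuboct k p.1 p.2}


lemma diag_card {n : ℕ} :
    (Finset.univ.filter fun q : Fin n × Fin n => q.1 = q.2).card = n := by
  classical
  have : (Finset.univ.filter fun q : Fin n × Fin n => q.1 = q.2) =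
      Finset.image (fun a : Fin n => (a, a)) Finset.univ := by
    ext ⟨a, b⟩
    simp [eq_comm]
  rw [this, Finset.card_image_of_injective _ (fun a b h => (Prod.ext_iff.1 h).1)]
  simp

lemma offdiag_card {n : ℕ} :
    (Finset.univ.filter fun q : Fin n × Fin n => q.1 ≠ q.2).card = n * (n - 1) := by
  classical
  have h := Finset.card_filter_add_card_filter_not
    (s := (Finset.univ : Finset (Fin n × Fin n))) (p := fun q => q.1 = q.2)
  rw [diag_card] at h
  have hu : (Finset.univ : Finset (Fin n × Fin n)).card = n * n := by
    simp [Finset.card_univ]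
  have h2 : n * (n - 1) = n * n - n := by
    rcases n with _ | m
    · simp
    · rw [Nat.mul_sub]; ring_nf
  have h3 : (Finset.filter (fun q : Fin n × Fin n => q.1 ≠ q.2) Finset.univ).card
      = (Finset.filter (fun q : Fin n × Fin n => ¬ q.1 = q.2) Finset.univ).card := rfl
  omega

lemma fiber_card_le {d n : ℕ} (hd : 0 < d) (Q : (Fin d → Fin n) → Fin n)
    (hQ : IsLatinHypercube Q) (c : Fin n) :
    (Finset.univ.filter fun x : Fin d → Fin n => Q x = c).card ≤ n ^ (d - 1) := by
  classical
  set i0 : Fin d := ⟨0, hd⟩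
  have key : ((Finset.univ : Finset ({i : Fin d // i ≠ i0} → Fin n))).card = n ^ (d - 1) := by
    rw [Finset.card_univ, Fintype.card_fun, Fintype.card_fin]
    congr 1
    have : Fintype.card {i : Fin d // ¬ i = i0} = d - 1 := by
      rw [Fintype.card_subtype_compl, Fintype.card_subtype_eq, Fintype.card_fin]
    simpa using this
  rw [← key]
  apply Finset.card_le_card_of_injOn (fun x => fun i => x i.1)
  · intro x _; exact Finset.mem_univ _
  · intro x hx y hy hxy
    simp only [Finset.mem_coe, Finset.mem_filter] at hx hy
    have h1 : y = Function.update x i0 (y i0) := by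
      funext l
      by_cases hl : l = i0
      · subst hl; simp
      · rw [Function.update_of_ne hl]
        exact (congrFun hxy ⟨l, hl⟩).symm
    have h2 : Q (Function.update x i0 (x i0)) = Q (Function.update x i0 (y i0)) := by
      rw [Function.update_eq_self, hx.2, ← h1, hy.2]
    have := (hQ i0 x).1 h2
    rw [h1, ← this, Function.update_eq_self]

open Finset in
lemma adm_card_le {d n k : ℕ} :
    (Finset.univ.filter fun A : Fin d → Fin n × Fin n =>
      ({i | (A i).1 ≠ (A i).2}).ncard = k).card ≤ d.choose k * (n ^ d * (n - 1) ^ k) := by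
  classical
  have hncard : ∀ A : Fin d → Fin n × Fin n,
      ({i | (A i).1 ≠ (A i).2}).ncard = (univ.filter fun i => (A i).1 ≠ (A i).2).card := by
    intro A
    rw [Set.ncard_eq_toFinset_card', Set.toFinset_setOf]
  have hmem : ∀ A ∈ (Finset.univ.filter fun A : Fin d → Fin n × Fin n =>
      ({i | (A i).1 ≠ (A i).2}).ncard = k),
      (univ.filter fun i => (A i).1 ≠ (A i).2) ∈ Finset.powersetCard k (univ : Finset (Fin d)) := by
    intro A hA
    rw [mem_filter, hncard] at hA
    rw [mem_powersetCard]
    exact ⟨subset_univ _, hA.2⟩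
  rw [Finset.card_eq_sum_card_fiberwise hmem]
  have hterm : ∀ S ∈ Finset.powersetCard k (univ : Finset (Fin d)),
      ((Finset.univ.filter fun A : Fin d → Fin n × Fin n =>
        ({i | (A i).1 ≠ (A i).2}).ncard = k).filter
        (fun A => (univ.filter fun i => (A i).1 ≠ (A i).2) = S)).card ≤ n ^ d * (n - 1) ^ k := by
    intro S hS
    rw [mem_powersetCard] at hS
    have hkd : k ≤ d := by
      rw [← hS.2]
      simpa using Finset.card_le_card hS.1
    set t : Fin d → Finset (Fin n × Fin n) :=
      fun i => univ.filter fun q : Fin n × Fin n => ((q.1 ≠ q.2) ↔ i ∈ S) with ht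
    have hsub : (Finset.univ.filter fun A : Fin d → Fin n × Fin n =>
        ({i | (A i).1 ≠ (A i).2}).ncard = k).filter
        (fun A => (univ.filter fun i => (A i).1 ≠ (A i).2) = S) ⊆ Fintype.piFinset t := by
      intro A hA
      rw [mem_filter, mem_filter] at hA
      rw [Fintype.mem_piFinset]
      intro i
      rw [ht]
      simp only [mem_filter, mem_univ, true_and]
      rw [← hA.2]
      simp
    refine le_trans (Finset.card_le_card hsub) ?_
    rw [Fintype.card_piFinset]
    apply le_of_eq
    have h1 : univ.filter (fun i : Fin d => i ∈ S) = S := by ext i; simp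
    have h2 : univ.filter (fun i : Fin d => ¬ i ∈ S) = Sᶜ := by
      ext i; simp [Finset.mem_compl]
    have hfac : ∀ i : Fin d, (t i).card = if i ∈ S then n * (n - 1) else n := by
      intro i
      by_cases hi : i ∈ S
      · have : t i = univ.filter fun q : Fin n × Fin n => q.1 ≠ q.2 := by
          rw [ht]; exact Finset.filter_congr (fun q _ => by simp [hi])
        rw [if_pos hi, this, offdiag_card]
      · have : t i = univ.filter fun q : Fin n × Fin n => q.1 = q.2 := by
          rw [ht]; exact Finset.filter_congr (fun q _ => by simp [hi])
        rw [if_neg hi, this, _root_.diag_card]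
    calc ∏ i : Fin d, (t i).card = ∏ i : Fin d, (if i ∈ S then n * (n - 1) else n) := by
            exact Finset.prod_congr rfl (fun i _ => hfac i)
      _ = (n * (n - 1)) ^ S.card * n ^ Sᶜ.card := by
            rw [Finset.prod_ite, Finset.prod_const, Finset.prod_const, h1, h2]
      _ = n ^ d * (n - 1) ^ k := by
            rw [Finset.card_compl, hS.2, mul_pow]
            rw [Fintype.card_fin]
            rw [show n ^ k * (n-1)^k * n ^ (d - k) = (n ^ k * n ^ (d-k)) * (n-1)^k by ring]
            rw [← pow_add, Nat.add_sub_cancel' hkd]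
    
  refine le_trans (Finset.sum_le_sum hterm) ?_
  rw [Finset.sum_const, Finset.card_powersetCard, Finset.card_univ, Fintype.card_fin, smul_eq_mul]

open Finset in
/-- A `d`-dimensional latin hypercube of order `n` has at most
`(d choose k) * n ^ (2d - 1) * (n - 1) ^ k` `k`-dimensional cuboctahedra. -/
theorem kCuboctCount_le {d n k : ℕ} (hk : k ≤ d)
    (Q : (Fin d → Fin n) → Fin n) (hQ : IsLatinHypercube Q) :
    kCuboctCount Q k ≤ d.choose k * n ^ (2 * d - 1) * (n - 1) ^ k := by
  classical
  rcases Nat.eq_zero_or_pos d with hd | hd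
  · subst hd
    have hk0 : k = 0 := Nat.le_zero.mp hk
    subst hk0
    have h1 : kCuboctCount Q 0 ≤ 1 := by
      unfold kCuboctCount
      refine le_trans (Set.ncard_le_ncard (Set.subset_univ _) (Set.toFinite _)) ?_
      rw [Set.ncard_univ]
      simp [Nat.card_eq_fintype_card]
    simpa using h1
  · unfold kCuboctCount
    set G : Finset ((Fin d → Fin n × Fin n) × (Fin d → Fin n)) :=
      Finset.univ.filter fun p =>
        ({i | (p.1 i).1 ≠ (p.1 i).2}).ncard = k ∧ Q p.2 = Q (fun i => (p.1 i).1)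
      with hGdef
    have hmaps : ∀ p ∈ {p : (Fin d → Fin n × Fin n) × (Fin d → Fin n × Fin n) |
        IsCuboct Q p.1 p.2 ∧ IsKDimCuboct k p.1 p.2},
        (p.1, fun i => (p.2 i).1) ∈ (G : Set _) := by
      rintro ⟨A, B⟩ hp
      obtain ⟨hc, hs, hn⟩ := hp
      simp only [hGdef, coe_filter, Set.mem_setOf_eq, mem_univ, true_and]
      refine ⟨hn, ?_⟩
      have := hc (fun _ => 0)
      simpa using this.symm
    have hinj : Set.InjOn (fun p : (Fin d → Fin n × Fin n) × (Fin d → Fin n × Fin n) =>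
        (p.1, fun i => (p.2 i).1)) {p | IsCuboct Q p.1 p.2 ∧ IsKDimCuboct k p.1 p.2} := by
      rintro ⟨A, B⟩ hp ⟨A', B'⟩ hq heq
      obtain ⟨hc, hsB, -⟩ := hp
      obtain ⟨hc', hsB', -⟩ := hq
      simp only [Prod.mk.injEq] at heq
      obtain ⟨hA, hB1⟩ := heq
      subst hA
      have hB : B = B' := by
        funext i
        have h1 : (B i).1 = (B' i).1 := congrFun hB1 i
        by_cases hi : (A i).1 = (A i).2
        · -- degenerate coordinate
          have hBi : (B i).1 = (B i).2 := by
            by_contra h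
            exact ((Set.ext_iff.mp hsB i).mpr h) hi
          have hBi' : (B' i).1 = (B' i).2 := by
            by_contra h
            exact ((Set.ext_iff.mp hsB' i).mpr h) hi
          exact Prod.ext h1 (by rw [← hBi, ← hBi', h1])
        · set j : Fin d → Fin 2 := fun l => if l = i then 1 else 0 with hj
          have e : ∀ C : Fin d → Fin n × Fin n,
              (fun l => if j l = 0 then (C l).1 else (C l).2) =
              Function.update (fun l => (C l).1) i ((C i).2) := by
            intro C
            funext l
            by_cases hl : l = i
            · subst hl; simp [hj]
            · simp [hj, hl, Function.update_of_ne hl]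
          have h2 := (hc j).symm.trans (hc' j)
          rw [e B, e B', hB1] at h2
          have := (hQ i (fun l => (B' l).1)).1 h2
          exact Prod.ext h1 this
      rw [hB]
    refine le_trans (Set.ncard_le_ncard_of_injOn _ hmaps hinj (G.finite_toSet)) ?_
    rw [Set.ncard_coe_finset]
    set 𝒜 : Finset (Fin d → Fin n × Fin n) :=
      Finset.univ.filter fun A : Fin d → Fin n × Fin n =>
        ({i | (A i).1 ≠ (A i).2}).ncard = k with h𝒜
    have hmem2 : ∀ p ∈ G, p.1 ∈ 𝒜 := by
      rintro ⟨A, b⟩ hp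
      simp only [hGdef, mem_filter, mem_univ, true_and] at hp
      simp only [h𝒜, mem_filter, mem_univ, true_and]
      exact hp.1
    rw [Finset.card_eq_sum_card_fiberwise hmem2]
    have hterm : ∀ A ∈ 𝒜, (G.filter fun p => p.1 = A).card ≤ n ^ (d - 1) := by
      intro A hA
      refine le_trans ?_ (fiber_card_le hd Q hQ (Q (fun i => (A i).1)))
      apply Finset.card_le_card_of_injOn (fun p => p.2)
      · rintro ⟨A', b⟩ hp
        simp only [hGdef, mem_filter, mem_univ, true_and, mem_coe] at hp ⊢
        obtain ⟨⟨-, hb⟩, hA'⟩ := hp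
        subst hA'
        exact hb
      · rintro ⟨A1, b1⟩ hp ⟨A2, b2⟩ hq h
        simp only [mem_coe, mem_filter] at hp hq
        simp only at h
        rw [Prod.mk.injEq]
        exact ⟨hp.2.trans hq.2.symm, h⟩
    refine le_trans (Finset.sum_le_sum hterm) ?_
    rw [Finset.sum_const, smul_eq_mul]
    refine le_trans (Nat.mul_le_mul_right _ adm_card_le) ?_
    apply le_of_eq
    have h2d : 2 * d - 1 = d + (d - 1) := by omega
    rw [h2d, pow_add]
    ring
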